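/- Let N₁₂ be the 5-dimensional commutative ℂ-algebra with basis e₁, …, e₅ and nonzero products e₁e₁ = e₂, e₁e₂ = e₂e₁ = e₃, e₁e₃ = e₃e₁ = e₄, e₂e₂ = e₅, e₃e₃ = e₅, and let N₁₅ be the 5-dimensional commutative ℂ-algebra with basis e₁, …, e₅ and nonzero products e₁e₁ = e₂, e₁e₂ = e₂e₁ = e₃, e₂e₃ = e₃e₂ = e₄, e₃e₃ = e₅ (in each case all other products of basis vectors are zero). Then N₁₂ and N₁₅ are not isomorphic as ℂ-algebras. -/
import Mathlib


/-- The multiplication of the 5-dimensional commutative algebra `N₁₂` with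
`e₁e₁ = e₂`, `e₁e₂ = e₂e₁ = e₃`, `e₁e₃ = e₃e₁ = e₄`, `e₂e₂ = e₅`, `e₃e₃ = e₅`,
on the carrier `Fin 5 → ℂ`. -/
def mulN12 (u v : Fin 5 → ℂ) : Fin 5 → ℂ :=
  ![0, u 0 * v 0, u 0 * v 1 + u 1 * v 0, u 0 * v 2 + u 2 * v 0, u 1 * v 1 + u 2 * v 2]

/-- The multiplication of the 5-dimensional commutative algebra `N₁₅` with
`e₁e₁ = e₂`, `e₁e₂ = e₂e₁ = e₃`, `e₂e₃ = e₃e₂ = e₄`, `e₃e₃ = e₅`,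
on the carrier `Fin 5 → ℂ`. -/
def mulN15 (u v : Fin 5 → ℂ) : Fin 5 → ℂ :=
  ![0, u 0 * v 0, u 0 * v 1 + u 1 * v 0, u 1 * v 2 + u 2 * v 1, u 2 * v 2]

/-- The algebras `N₁₂` and `N₁₅` are not isomorphic as `ℂ`-algebras. -/
theorem stmt17 :
    ¬ ∃ e : (Fin 5 → ℂ) ≃ₗ[ℂ] (Fin 5 → ℂ),
      ∀ u v : Fin 5 → ℂ, e (mulN12 u v) = mulN15 (e u) (e v) := by
  rintro ⟨e, he⟩
  -- first coordinate of the image of any product vanishes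
  have h0 : ∀ u v : Fin 5 → ℂ, e (mulN12 u v) 0 = 0 := by
    intro u v
    rw [he]
    simp [mulN15]
  -- the functional x ↦ (e x) 0 vanishes on {x : x 0 = 0}
  have hS : ∀ x : Fin 5 → ℂ, x 0 = 0 → e x 0 = 0 := by
    intro x hx
    have hx' : x = x 1 • mulN12 ![1,0,0,0,0] ![1,0,0,0,0]
        + x 2 • mulN12 ![1,0,0,0,0] ![0,1,0,0,0]
        + x 3 • mulN12 ![1,0,0,0,0] ![0,0,1,0,0]
        + x 4 • mulN12 ![0,1,0,0,0] ![0,1,0,0,0] := by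
      funext i
      fin_cases i <;> simp [mulN12, hx]
    rw [hx']
    simp only [map_add, map_smul, Pi.add_apply, Pi.smul_apply, h0, smul_zero, add_zero, zero_add]
  set c : ℂ := e ![1,0,0,0,0] 0 with hc
  have hdecomp : ∀ x : Fin 5 → ℂ, e x 0 = x 0 * c := by
    intro x
    have hx' : x = x 0 • ![(1:ℂ),0,0,0,0] + (x - x 0 • ![(1:ℂ),0,0,0,0]) := by ring
    have hy : (x - x 0 • ![(1:ℂ),0,0,0,0]) 0 = 0 := by simp
    conv_lhs => rw [hx']
    rw [map_add, map_smul, Pi.add_apply, Pi.smul_apply, hS _ hy, add_zero, smul_eq_mul, ← hc]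
  have hcne : c ≠ 0 := by
    intro h
    obtain ⟨x, hx⟩ := e.surjective ![1,0,0,0,0]
    have := hdecomp x
    rw [hx, h, mul_zero] at this
    simp at this
  set u : Fin 5 → ℂ := e.symm ![0,1,0,0,0] with hu
  set v : Fin 5 → ℂ := e.symm ![0,0,1,0,0] with hv
  have heu : e u = ![0,1,0,0,0] := e.apply_symm_apply _
  have hev : e v = ![0,0,1,0,0] := e.apply_symm_apply _
  have hu0 : u 0 = 0 := by
    have := hdecomp u
    rw [heu] at this
    have h' : u 0 * c = 0 := by simpa using this.symm
    rcases mul_eq_zero.mp h' with h | h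
    · exact h
    · exact absurd h hcne
  have hv0 : v 0 = 0 := by
    have := hdecomp v
    rw [hev] at this
    have h' : v 0 * c = 0 := by simpa using this.symm
    rcases mul_eq_zero.mp h' with h | h
    · exact h
    · exact absurd h hcne
  set t : ℂ := u 1 * v 1 + u 2 * v 2 with ht
  set s : ℂ := v 1 * v 1 + v 2 * v 2 with hs
  set w : Fin 5 → ℂ := e ![0,0,0,0,1] with hw
  have huv : mulN12 u v = t • ![(0:ℂ),0,0,0,1] := by
    funext i
    fin_cases i <;> simp [mulN12, hu0, hv0, ht]
  have hvv : mulN12 v v = s • ![(0:ℂ),0,0,0,1] := by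
    funext i
    fin_cases i <;> simp [mulN12, hv0, hs]
  have h1 : t • w = ![0,0,0,1,0] := by
    rw [hw, ← map_smul, ← huv, he, heu, hev]
    funext i
    fin_cases i <;> simp [mulN15]
  have h2 : s • w = ![0,0,0,0,1] := by
    rw [hw, ← map_smul, ← hvv, he, hev]
    funext i
    fin_cases i <;> simp [mulN15]
  have e13 : t * w 3 = 1 := by
    have := congrFun h1 3; simpa using this
  have e14 : t * w 4 = 0 := by
    have := congrFun h1 4; simpa using this
  have e23 : s * w 3 = 0 := by
    have := congrFun h2 3; simpa using this
  have e24 : s * w 4 = 1 := by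
    have := congrFun h2 4; simpa using this
  have htne : t ≠ 0 := by intro h; rw [h, zero_mul] at e13; exact one_ne_zero e13.symm
  have hsne : s ≠ 0 := by intro h; rw [h, zero_mul] at e24; exact one_ne_zero e24.symm
  have hw3 : w 3 = 0 := by
    rcases mul_eq_zero.mp e23 with h | h
    · exact absurd h hsne
    · exact h
  rw [hw3, mul_zero] at e13
  exact one_ne_zero e13.symm
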